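/- Let e = α + iβ ∈ ℂ with α² + β² = 1, r ∈ (0,1), and f : [a,b] → ℂ Lebesgue integrable with |f(t) − e| ≤ r for a.e. t ∈ [a,b]. Then √(1 − r²) · ∫ₐᵇ |f(t)| dt ≤ |∫ₐᵇ f(t) dt|. -/

import Mathlib

open MeasureTheory

theorem stmt_13 {a b : ℝ} {f : ℝ → ℂ} (hf : IntegrableOn f (Set.Icc a b))
    {α β : ℝ} (hαβ : α ^ 2 + β ^ 2 = 1) {r : ℝ} (hr : r ∈ Set.Ioo (0 : ℝ) 1)
    (h : ∀ᵐ t ∂(volume.restrict (Set.Icc a b)),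
      ‖f t - (α + β * Complex.I)‖ ≤ r) :
    Real.sqrt (1 - r ^ 2) * ∫ t in Set.Icc a b, ‖f t‖ ≤
      ‖∫ t in Set.Icc a b, f t‖ := by
  set e : ℂ := α + β * Complex.I with he
  have hnormSq : Complex.normSq e = 1 := by
    simp [he, Complex.normSq_apply]
    nlinarith [hαβ]
  have habs : ‖e‖ = 1 := by
    have := Complex.sq_norm e
    rw [hnormSq] at this
    nlinarith [norm_nonneg e]
  set c := Real.sqrt (1 - r ^ 2) with hc
  have hc2 : c ^ 2 = 1 - r ^ 2 := Real.sq_sqrt (by nlinarith [hr.1, hr.2])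
  have hcnn : 0 ≤ c := Real.sqrt_nonneg _
  have hee : (starRingEnd ℂ) e * e = 1 := by
    rw [mul_comm, Complex.mul_conj, hnormSq]; norm_num
  have key : ∀ z : ℂ, ‖z - e‖ ≤ r →
      c * ‖z‖ ≤ ((starRingEnd ℂ) e * z).re := by
    intro z hz
    have h1 : ‖(starRingEnd ℂ) e * z - 1‖ ≤ r := by
      have heq : (starRingEnd ℂ) e * z - 1 = (starRingEnd ℂ) e * (z - e) := by
        rw [mul_sub, hee]
      rw [heq, norm_mul, Complex.norm_conj, habs, one_mul]
      exact hz
    set w := (starRingEnd ℂ) e * z with hw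
    have hwz : ‖w‖ = ‖z‖ := by
      rw [hw, norm_mul, Complex.norm_conj, habs, one_mul]
    rw [← hwz]
    have h2 : Complex.normSq (w - 1) ≤ r ^ 2 := by
      have := Complex.sq_norm (w - 1)
      nlinarith [norm_nonneg (w - 1)]
    have h3 : Complex.normSq (w - 1) = Complex.normSq w - 2 * w.re + 1 := by
      simp [Complex.normSq_apply]; ring
    have h4 : (‖w‖) ^ 2 = Complex.normSq w := Complex.sq_norm w
    nlinarith [sq_nonneg (‖w‖ - c), norm_nonneg w]
  have hf' : Integrable (fun t => (starRingEnd ℂ) e * f t)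
      (volume.restrict (Set.Icc a b)) := hf.const_mul _
  have hInt1 : Integrable (fun t => ‖f t‖)
      (volume.restrict (Set.Icc a b)) := by
    simpa using hf.norm
  have hInt2 : Integrable (fun t => ((starRingEnd ℂ) e * f t).re)
      (volume.restrict (Set.Icc a b)) := hf'.re
  have step1 : c * ∫ t in Set.Icc a b, ‖f t‖
      ≤ ∫ t in Set.Icc a b, ((starRingEnd ℂ) e * f t).re := by
    rw [← integral_const_mul]
    refine integral_mono_ae (hInt1.const_mul c) hInt2 ?_
    filter_upwards [h] with t ht
    exact key (f t) ht
  have step2 : (∫ t in Set.Icc a b, ((starRingEnd ℂ) e * f t).re)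
      = ((starRingEnd ℂ) e * ∫ t in Set.Icc a b, f t).re := by
    have h5 := integral_re hf'
    rw [integral_const_mul] at h5
    simpa using h5
  calc c * ∫ t in Set.Icc a b, ‖f t‖
      ≤ ((starRingEnd ℂ) e * ∫ t in Set.Icc a b, f t).re := by
        rw [← step2]; exact step1
    _ ≤ ‖(starRingEnd ℂ) e * ∫ t in Set.Icc a b, f t‖ :=
        Complex.re_le_norm _
    _ = ‖∫ t in Set.Icc a b, f t‖ := by
        rw [norm_mul, Complex.norm_conj, habs, one_mul]
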